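/- arXiv:math/9403201 — 3 statements merged into one kernel-verified Lean document; each statement's English description precedes it below -/
import Mathlib

section
/- If 𝒪̄ is a maximal off-binary family in 2^{<ω} and π : ω^{<ω} → 2^{<ω} is the order-embedding sending ⟨n₀,…,n_k⟩ to 1^{n₀}⌢0⌢⋯⌢1^{n_k}⌢0, then the family of infinite pullbacks {π⁻¹(Ā) : Ā ∈ 𝒪̄, π⁻¹(Ā) infinite} is a maximal off-branch family in ω^{<ω}. -/
/-- A branch of the tree `ω^{<ω}`: a maximal chain in the initial-segment order. -/
def IsBranch (b : Set (List ℕ)) : Prop := IsMaxChain (· <+: ·) b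

/-- A set of nodes of `ω^{<ω}` is off-branch if it meets every branch finitely. -/
def OffBranch (A : Set (List ℕ)) : Prop := ∀ b, IsBranch b → (A ∩ b).Finite

/-- A maximal off-branch family in `ω^{<ω}`. -/
def MaxOffBranchFam (𝒪 : Set (Set (List ℕ))) : Prop :=
  ((∀ A ∈ 𝒪, A.Infinite ∧ OffBranch A) ∧ 𝒪.Pairwise (fun A B => (A ∩ B).Finite)) ∧
  ∀ B : Set (List ℕ), B.Infinite → OffBranch B → ∃ A ∈ 𝒪, (B ∩ A).Infinite

/-- A branch of the binary tree `2^{<ω}`: a maximal chain in the initial-segment order. -/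
def IsBinBranch (b : Set (List Bool)) : Prop := IsMaxChain (· <+: ·) b

/-- A set of nodes of `2^{<ω}` is off-binary if it meets every branch finitely. -/
def OffBinary (A : Set (List Bool)) : Prop := ∀ b, IsBinBranch b → (A ∩ b).Finite

/-- A maximal off-binary family in `2^{<ω}`. -/
def MaxOffBinaryFam (𝒪 : Set (Set (List Bool))) : Prop :=
  ((∀ A ∈ 𝒪, A.Infinite ∧ OffBinary A) ∧ 𝒪.Pairwise (fun A B => (A ∩ B).Finite)) ∧
  ∀ B : Set (List Bool), B.Infinite → OffBinary B → ∃ A ∈ 𝒪, (B ∩ A).Infinite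

/-- The canonical embedding `π : ω^{<ω} → 2^{<ω}` sending `⟨n₀,…,n_k⟩` to
`1^{n₀}⌢0⌢⋯⌢1^{n_k}⌢0`. -/
def piEmb (σ : List ℕ) : List Bool :=
  σ.flatMap fun n => List.replicate n true ++ [false]

lemma piEmb_cons (n : ℕ) (σ : List ℕ) :
    piEmb (n :: σ) = List.replicate n true ++ false :: piEmb σ := by
  simp [piEmb]

lemma piEmb_mono {σ τ : List ℕ} (h : σ <+: τ) : piEmb σ <+: piEmb τ := by
  obtain ⟨ρ, rfl⟩ := h
  exact ⟨piEmb ρ, by simp [piEmb]⟩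

lemma block_prefix : ∀ {n m : ℕ} {xs ys : List Bool},
    (List.replicate n true ++ false :: xs) <+: (List.replicate m true ++ false :: ys) →
    n = m ∧ xs <+: ys := by
  intro n
  induction n with
  | zero =>
    intro m xs ys hp
    cases m with
    | zero => simpa using hp
    | succ m =>
      rw [List.replicate_succ, List.cons_append] at hp
      simp [List.cons_prefix_cons] at hp
  | succ n ih =>
    intro m xs ys hp
    cases m with
    | zero =>
      rw [List.replicate_succ, List.cons_append] at hp
      simp [List.cons_prefix_cons] at hp
    | succ m =>
      simp only [List.replicate_succ, List.cons_append, List.cons_prefix_cons] at hp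
      obtain ⟨h1, h2⟩ := ih hp.2
      exact ⟨by omega, h2⟩

lemma piEmb_prefix_iff : ∀ {σ τ : List ℕ}, piEmb σ <+: piEmb τ ↔ σ <+: τ := by
  intro σ
  induction σ with
  | nil => intro τ; simp [piEmb]
  | cons n σ ih =>
    intro τ
    refine ⟨?_, piEmb_mono⟩
    cases τ with
    | nil =>
      intro hp
      have := hp.length_le
      simp [piEmb_cons, piEmb] at this
    | cons m τ =>
      rw [piEmb_cons, piEmb_cons]
      intro hp
      obtain ⟨rfl, h2⟩ := block_prefix hp
      exact List.cons_prefix_cons.2 ⟨rfl, ih.1 h2⟩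

lemma piEmb_inj : Function.Injective piEmb := by
  intro σ τ hst
  have h1 : σ <+: τ := piEmb_prefix_iff.1 (by rw [hst])
  have h2 : τ <+: σ := piEmb_prefix_iff.1 (by rw [hst])
  exact h1.eq_of_length (h1.length_le.antisymm h2.length_le)

/-- If `𝒪̄` is a maximal off-binary family, then the family of infinite pullbacks
`π⁻¹(Ā)` for `Ā ∈ 𝒪̄` is a maximal off-branch family in `ω^{<ω}`. -/
theorem pullback_max_offBinary_to_offBranch (𝒪b : Set (Set (List Bool)))
    (h : MaxOffBinaryFam 𝒪b) :
    MaxOffBranchFam {A | ∃ Ab ∈ 𝒪b, A = piEmb ⁻¹' Ab ∧ (piEmb ⁻¹' Ab).Infinite} := by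
  obtain ⟨⟨hmem, hpair⟩, hmax⟩ := h
  refine ⟨⟨?_, ?_⟩, ?_⟩
  · rintro A ⟨Ab, hAb, rfl, hinf⟩
    refine ⟨hinf, ?_⟩
    intro b hb
    have himg : IsChain (· <+: ·) (piEmb '' b) :=
      IsChain.image_of_map_rel _ _ _ (fun _ _ h => piEmb_mono h) hb.1
    obtain ⟨bb, hbb, hsub⟩ := himg.exists_maxChain
    refine Set.Finite.subset (((hmem Ab hAb).2 bb hbb).preimage piEmb_inj.injOn) ?_
    rintro σ ⟨h1, h2⟩
    exact ⟨h1, hsub ⟨σ, h2, rfl⟩⟩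
  · rintro A ⟨Ab, hAb, rfl, _⟩ B ⟨Bb, hBb, rfl, _⟩ hne
    have hABne : Ab ≠ Bb := fun he => hne (by rw [he])
    have hfin := hpair hAb hBb hABne
    refine Set.Finite.subset (hfin.preimage piEmb_inj.injOn) ?_
    rintro σ ⟨h1, h2⟩
    exact ⟨h1, h2⟩
  · intro B hBinf hBoff
    have hBbinf : (piEmb '' B).Infinite := hBinf.image piEmb_inj.injOn
    have hBboff : OffBinary (piEmb '' B) := by
      intro bb hbb
      have hC : IsChain (· <+: ·) (piEmb ⁻¹' bb) := by
        intro σ hσ τ hτ hne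
        rcases hbb.1 hσ hτ (fun he => hne (piEmb_inj he)) with h | h
        · exact Or.inl (piEmb_prefix_iff.1 h)
        · exact Or.inr (piEmb_prefix_iff.1 h)
      obtain ⟨b, hb, hCb⟩ := hC.exists_maxChain
      refine Set.Finite.subset ((hBoff b hb).image piEmb) ?_
      rintro x ⟨⟨σ, hσB, rfl⟩, hxbb⟩
      exact ⟨σ, ⟨hσB, hCb hxbb⟩, rfl⟩
    obtain ⟨Ab, hAb, hint⟩ := hmax (piEmb '' B) hBbinf hBboff
    have hint' : (B ∩ piEmb ⁻¹' Ab).Infinite := by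
      have : piEmb '' (B ∩ piEmb ⁻¹' Ab) = piEmb '' B ∩ Ab := Set.image_inter_preimage _ _ _
      exact Set.Infinite.of_image _ (this ▸ hint)
    exact ⟨piEmb ⁻¹' Ab, ⟨Ab, hAb, rfl, hint'.mono Set.inter_subset_right⟩, hint'⟩
end

section
/- The cardinal invariants 𝔬 (minimum size of a maximal off-branch family in ω^{<ω}) and 𝔬_b (minimum size of a maximal off-binary family in 2^{<ω}) are equal. -/
/-- `𝔬`: the least cardinality of a maximal off-branch family. -/
noncomputable def frakO : Cardinal :=
  sInf {c | ∃ 𝒪 : Set (Set (List ℕ)), MaxOffBranchFam 𝒪 ∧ Cardinal.mk ↥𝒪 = c}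

/-- `𝔬_b`: the least cardinality of a maximal off-binary family. -/
noncomputable def frakOb : Cardinal :=
  sInf {c | ∃ 𝒪 : Set (Set (List Bool)), MaxOffBinaryFam 𝒪 ∧ Cardinal.mk ↥𝒪 = c}

namespace OffAux

variable {α β : Type}

/-- Generic version of off-branch/off-binary. -/
def OffB (A : Set (List α)) : Prop := ∀ b, IsMaxChain (· <+: ·) b → (A ∩ b).Finite

/-- Generic version of a maximal off-branch family. -/
def MaxFam (𝒪 : Set (Set (List α))) : Prop :=
  ((∀ A ∈ 𝒪, A.Infinite ∧ OffB A) ∧ 𝒪.Pairwise (fun A B => (A ∩ B).Finite)) ∧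
  ∀ B : Set (List α), B.Infinite → OffB B → ∃ A ∈ 𝒪, (B ∩ A).Infinite

lemma exists_maxFam : ∃ 𝒪 : Set (Set (List α)), MaxFam 𝒪 := by
  have hzorn : ∀ c ⊆ {𝒪 : Set (Set (List α)) |
      (∀ A ∈ 𝒪, A.Infinite ∧ OffB A) ∧ 𝒪.Pairwise (fun A B => (A ∩ B).Finite)},
      IsChain (· ⊆ ·) c → ∃ ub ∈ {𝒪 : Set (Set (List α)) |
      (∀ A ∈ 𝒪, A.Infinite ∧ OffB A) ∧ 𝒪.Pairwise (fun A B => (A ∩ B).Finite)},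
      ∀ s ∈ c, s ⊆ ub := by
    intro c hcS hc
    refine ⟨⋃₀ c, ⟨⟨?_, ?_⟩, fun s hs => Set.subset_sUnion_of_mem hs⟩⟩
    · rintro A ⟨s, hs, hA⟩; exact (hcS hs).1 A hA
    · rintro A ⟨s, hs, hA⟩ B ⟨t, ht, hB⟩ hne
      rcases eq_or_ne s t with rfl | hst
      · exact (hcS hs).2 hA hB hne
      · rcases hc hs ht hst with h | h
        · exact (hcS ht).2 (h hA) hB hne
        · exact (hcS hs).2 hA (h hB) hne
  obtain ⟨M, hM⟩ := zorn_subset _ hzorn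
  · refine ⟨M, ⟨hM.prop, ?_⟩⟩
    intro B hBinf hBoff
    by_contra hcon
    push_neg at hcon
    have hfin : ∀ A ∈ M, (B ∩ A).Finite := fun A hA => hcon A hA
    have hins : insert B M ∈
        {𝒪 : Set (Set (List α)) |
          (∀ A ∈ 𝒪, A.Infinite ∧ OffB A) ∧ 𝒪.Pairwise (fun A B => (A ∩ B).Finite)} := by
      constructor
      · rintro A (rfl | hA)
        · exact ⟨hBinf, hBoff⟩
        · exact hM.prop.1 A hA
      · refine hM.prop.2.insert ?_
        intro A hA _
        exact ⟨hfin A hA, Set.inter_comm A B ▸ hfin A hA⟩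
    have hsub : insert B M ⊆ M := hM.2 hins (Set.subset_insert _ _)
    have hBM : B ∈ M := hsub (Set.mem_insert _ _)
    exact hBinf (by simpa using hfin B hBM)

lemma maxFam_transfer (g : List α → List β)
    (hg : ∀ s t : List α, g s <+: g t ↔ s <+: t)
    {𝒪 : Set (Set (List β))} (h𝒪 : MaxFam 𝒪) :
    MaxFam ((fun A => g ⁻¹' A) '' {A | A ∈ 𝒪 ∧ (g ⁻¹' A).Infinite}) := by
  have hginj : Function.Injective g := by
    intro s t h
    have h1 : s <+: t := (hg s t).mp (h ▸ List.prefix_refl _)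
    have h2 : t <+: s := (hg t s).mp (h ▸ List.prefix_refl _)
    exact h1.eq_of_length (le_antisymm h1.length_le h2.length_le)
  -- preimages of off sets are off
  have hpre : ∀ A : Set (List β), OffB A → OffB (g ⁻¹' A) := by
    intro A hA b hb
    have hchain : IsChain (· <+: ·) (g '' b) := by
      rintro _ ⟨x, hx, rfl⟩ _ ⟨y, hy, rfl⟩ hne
      have hxy : x ≠ y := fun h => hne (by rw [h])
      rcases hb.1 hx hy hxy with h | h
      · exact Or.inl ((hg _ _).mpr h)
      · exact Or.inr ((hg _ _).mpr h)
    obtain ⟨c, hc, hsub⟩ := hchain.exists_maxChain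
    have hss : g '' (g ⁻¹' A ∩ b) ⊆ A ∩ c := by
      rintro _ ⟨x, ⟨hxA, hxb⟩, rfl⟩
      exact ⟨hxA, hsub ⟨x, hxb, rfl⟩⟩
    exact Set.Finite.of_finite_image ((hA c hc).subset hss) hginj.injOn
  -- images of off sets are off
  have himg : ∀ B : Set (List α), OffB B → OffB (g '' B) := by
    intro B hB c hc
    have hchain : IsChain (· <+: ·) (g ⁻¹' c) := by
      intro x hx y hy hne
      rcases hc.1 hx hy (fun h => hne (hginj h)) with h | h
      · exact Or.inl ((hg _ _).mp h)
      · exact Or.inr ((hg _ _).mp h)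
    obtain ⟨b, hb, hsub⟩ := hchain.exists_maxChain
    have hss : g '' B ∩ c ⊆ g '' (B ∩ b) := by
      rintro z ⟨⟨x, hxB, rfl⟩, hzc⟩
      exact ⟨x, ⟨hxB, hsub hzc⟩, rfl⟩
    exact (((hB b hb).image g).subset hss)
  refine ⟨⟨?_, ?_⟩, ?_⟩
  · rintro _ ⟨A, ⟨hA𝒪, hAinf⟩, rfl⟩
    exact ⟨hAinf, hpre A (h𝒪.1.1 A hA𝒪).2⟩
  · rintro _ ⟨A, ⟨hA𝒪, _⟩, rfl⟩ _ ⟨A', ⟨hA'𝒪, _⟩, rfl⟩ hne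
    have hAA' : A ≠ A' := fun h => hne (by rw [h])
    have hfin := h𝒪.1.2 hA𝒪 hA'𝒪 hAA'
    rw [← Set.preimage_inter]
    exact hfin.preimage hginj.injOn
  · intro B hBinf hBoff
    obtain ⟨A, hA𝒪, hABinf⟩ := h𝒪.2 (g '' B) (hBinf.image hginj.injOn) (himg B hBoff)
    have hsub : g '' B ∩ A ⊆ g '' (B ∩ g ⁻¹' A) := by
      rintro z ⟨⟨x, hxB, rfl⟩, hzA⟩
      exact ⟨x, ⟨hxB, hzA⟩, rfl⟩
    have hinf : (B ∩ g ⁻¹' A).Infinite := Set.Infinite.of_image g (hABinf.mono hsub)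
    exact ⟨g ⁻¹' A, ⟨A, ⟨hA𝒪, hinf.mono Set.inter_subset_right⟩, rfl⟩, hinf⟩

/-! ### The two prefix-reflecting codings -/

/-- The coding of `2^{<ω}` into `ω^{<ω}`. -/
def iota : List Bool → List ℕ := List.map fun b => cond b 1 0

lemma iota_prefix_iff (s t : List Bool) : iota s <+: iota t ↔ s <+: t := by
  constructor
  · intro h
    have hf : Function.Injective (fun b : Bool => cond b 1 0) := by
      intro a b hab; cases a <;> cases b <;> simp_all
    rw [List.prefix_iff_eq_take] at h ⊢
    have : List.map (fun b : Bool => cond b 1 0) s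
        = List.map (fun b : Bool => cond b 1 0) (t.take s.length) := by
      simpa [iota, List.map_take] using h
    exact List.map_injective_iff.mpr hf this
  · exact fun h => h.map _

/-- A basic block of the coding of `ω^{<ω}` into `2^{<ω}`. -/
def blk (n : ℕ) : List Bool := List.replicate n false ++ [true]

lemma blk_zero : blk 0 = [true] := rfl

lemma blk_succ (n : ℕ) : blk (n + 1) = false :: blk n := by
  simp [blk, List.replicate_succ]

/-- The coding of `ω^{<ω}` into `2^{<ω}`. -/
def cod : List ℕ → List Bool := fun s => s.flatMap blk

lemma cod_nil : cod [] = [] := rfl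

lemma cod_cons (a : ℕ) (s : List ℕ) : cod (a :: s) = blk a ++ cod s := by
  simp [cod]

lemma blk_prefix : ∀ (a b : ℕ) (u v : List Bool),
    blk a ++ u <+: blk b ++ v → a = b ∧ u <+: v := by
  intro a
  induction a with
  | zero =>
    intro b u v h
    cases b with
    | zero =>
      rw [blk_zero] at h
      simpa using (List.cons_prefix_cons.mp h)
    | succ b =>
      rw [blk_zero, blk_succ] at h
      simpa using (List.cons_prefix_cons.mp h).1
  | succ a ih =>
    intro b u v h
    cases b with
    | zero =>
      rw [blk_zero, blk_succ] at h
      simpa using (List.cons_prefix_cons.mp h).1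
    | succ b =>
      rw [blk_succ, blk_succ] at h
      have h' := (List.cons_prefix_cons.mp h).2
      simp only [List.cons_append] at h
      have h'' := (List.cons_prefix_cons.mp h).2
      obtain ⟨hab, huv⟩ := ih b u v (by simpa using h'')
      exact ⟨by omega, huv⟩

lemma cod_prefix_iff (s t : List ℕ) : cod s <+: cod t ↔ s <+: t := by
  constructor
  · induction s generalizing t with
    | nil => exact fun _ => List.nil_prefix
    | cons a s ih =>
      intro h
      cases t with
      | nil =>
        exfalso
        have := List.prefix_nil.mp (by simpa [cod_nil] using h)
        rw [cod_cons] at this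
        simp [blk] at this
      | cons b t =>
        rw [cod_cons, cod_cons] at h
        obtain ⟨rfl, h2⟩ := blk_prefix a b _ _ h
        exact List.cons_prefix_cons.mpr ⟨rfl, ih t h2⟩
  · rintro ⟨r, rfl⟩
    rw [show cod (s ++ r) = cod s ++ cod r from List.flatMap_append]
    exact List.prefix_append _ _

end OffAux

open OffAux in
/-- `𝔬 = 𝔬_b`. -/
theorem frakO_eq_frakOb : frakO = frakOb := by
  have h1 : {c | ∃ 𝒪 : Set (Set (List ℕ)), MaxOffBranchFam 𝒪 ∧ Cardinal.mk ↥𝒪 = c}.Nonempty := by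
    obtain ⟨𝒪, h⟩ := exists_maxFam (α := ℕ)
    exact ⟨_, 𝒪, h, rfl⟩
  have h2 : {c | ∃ 𝒪 : Set (Set (List Bool)), MaxOffBinaryFam 𝒪 ∧ Cardinal.mk ↥𝒪 = c}.Nonempty := by
    obtain ⟨𝒪, h⟩ := exists_maxFam (α := Bool)
    exact ⟨_, 𝒪, h, rfl⟩
  obtain ⟨𝒪₁, h𝒪₁, hc1⟩ := csInf_mem h1
  obtain ⟨𝒪₂, h𝒪₂, hc2⟩ := csInf_mem h2
  apply le_antisymm
  · -- transfer the off-binary family `𝒪₂` back along `cod : List ℕ → List Bool`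
    have hT := maxFam_transfer cod cod_prefix_iff (𝒪 := 𝒪₂) h𝒪₂
    have hle : frakO ≤ Cardinal.mk
        ↥((fun A => cod ⁻¹' A) '' {A | A ∈ 𝒪₂ ∧ (cod ⁻¹' A).Infinite}) :=
      csInf_le' ⟨_, hT, rfl⟩
    calc frakO ≤ _ := hle
      _ ≤ Cardinal.mk ↥{A | A ∈ 𝒪₂ ∧ (cod ⁻¹' A).Infinite} := Cardinal.mk_image_le
      _ ≤ Cardinal.mk ↥𝒪₂ := Cardinal.mk_le_mk_of_subset (fun A hA => hA.1)
      _ = frakOb := hc2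
  · -- transfer the off-branch family `𝒪₁` back along `iota : List Bool → List ℕ`
    have hT := maxFam_transfer iota iota_prefix_iff (𝒪 := 𝒪₁) h𝒪₁
    have hle : frakOb ≤ Cardinal.mk
        ↥((fun A => iota ⁻¹' A) '' {A | A ∈ 𝒪₁ ∧ (iota ⁻¹' A).Infinite}) :=
      csInf_le' ⟨_, hT, rfl⟩
    calc frakOb ≤ _ := hle
      _ ≤ Cardinal.mk ↥{A | A ∈ 𝒪₁ ∧ (iota ⁻¹' A).Infinite} := Cardinal.mk_image_le
      _ ≤ Cardinal.mk ↥𝒪₁ := Cardinal.mk_le_mk_of_subset (fun A hA => hA.1)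
      _ = frakO := hc1
end

section
/- 𝔞 ≤ 𝔬: the almost-disjointness number 𝔞 is at most the minimum cardinality 𝔬 of a maximal off-branch family in the tree ω^{<ω}. -/
/-- An infinite maximal almost disjoint family of infinite subsets of `ω`. -/
def MadFam (𝒜 : Set (Set ℕ)) : Prop :=
  𝒜.Infinite ∧ (∀ A ∈ 𝒜, A.Infinite) ∧ 𝒜.Pairwise (fun A B => (A ∩ B).Finite) ∧
  ∀ B : Set ℕ, B.Infinite → ∃ A ∈ 𝒜, (B ∩ A).Infinite

/-- The almost-disjointness number `𝔞`. -/
noncomputable def frakA : Cardinal :=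
  sInf {c | ∃ 𝒜 : Set (Set ℕ), MadFam 𝒜 ∧ Cardinal.mk ↥𝒜 = c}

namespace Aux

def Br (f : ℕ → ℕ) : Set (List ℕ) := Set.range (fun k => (List.range k).map f)

lemma br_prefix (f : ℕ → ℕ) {k k' : ℕ} (h : k ≤ k') :
    (List.range k).map f <+: (List.range k').map f := by
  have h1 : List.take k (List.range k') <+: List.range k' := List.take_prefix _ _
  have h2 := h1.map f
  rwa [List.take_range, Nat.min_eq_left h] at h2

lemma isBranch_Br (f : ℕ → ℕ) : IsBranch (Br f) := by
  constructor
  · rintro a ⟨k, rfl⟩ b ⟨k', rfl⟩ hne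
    rcases le_total k k' with h | h
    · exact Or.inl (br_prefix f h)
    · exact Or.inr (br_prefix f h)
  · intro c hc hsub
    refine hsub.antisymm (fun l hl => ?_)
    have ht : (List.range l.length).map f ∈ c := hsub ⟨l.length, rfl⟩
    by_cases he : l = (List.range l.length).map f
    · exact ⟨l.length, he.symm⟩
    · rcases hc hl ht he with h | h
      · exact ⟨l.length, (h.eq_of_length (by simp)).symm⟩
      · exact ⟨l.length, (h.eq_of_length (by simp))⟩

lemma offBranch_inter_Br {A : Set (List ℕ)} (h : OffBranch A) (f : ℕ → ℕ) :
    (A ∩ Br f).Finite := h _ (isBranch_Br f)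

lemma br_infinite (f : ℕ → ℕ) : (Br f).Infinite :=
  Set.infinite_range_of_injective (fun a b hab => by
    have := congrArg List.length hab; simpa using this)


/-- A set any two distinct elements of which are `<+:`-incomparable is off-branch. -/
lemma offBranch_of_incomp {X : Set (List ℕ)}
    (h : ∀ x ∈ X, ∀ y ∈ X, x <+: y → x = y) : OffBranch X := by
  intro b hb
  have : (X ∩ b).Subsingleton := by
    rintro x ⟨hx1, hx2⟩ y ⟨hy1, hy2⟩
    by_contra hne
    rcases hb.1 hx2 hy2 hne with hp | hp
    · exact hne (h x hx1 y hy1 hp)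
    · exact hne (h y hy1 x hx1 hp).symm
  exact this.finite

def seqNM (n m : ℕ) : ℕ → ℕ := fun i => if i = 0 then n else if i = 1 then m else 0

def node (n m k : ℕ) : List ℕ := (List.range k).map (seqNM n m)

lemma node_len (n m k : ℕ) : (node n m k).length = k := by simp [node]

lemma node_get0 (n m k : ℕ) (h : 0 < k) : (node n m k)[0]'(by simp [node_len, h]) = n := by
  simp [node, seqNM]

lemma node_get1 (n m k : ℕ) (h : 2 ≤ k) : (node n m k)[1]'(by simp [node_len]; omega) = m := by
  simp [node, seqNM]

open Classical in
noncomputable def pickK (n m : ℕ) (U : Set (List ℕ)) : ℕ :=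
  if h : ∃ k, 2 ≤ k ∧ node n m k ∉ U then h.choose else 0

noncomputable def pickNode (n m : ℕ) (U : Set (List ℕ)) : List ℕ := node n m (pickK n m U)

lemma pick_spec {U : Set (List ℕ)} (hU : ∀ f, (U ∩ Br f).Finite) (n m : ℕ) :
    2 ≤ pickK n m U ∧ pickNode n m U ∉ U := by
  have hbad : {k | node n m k ∈ U}.Finite := by
    have h1 : (U ∩ Br (seqNM n m)).Finite := hU _
    have h2 : ((fun k => node n m k) ⁻¹' (U ∩ Br (seqNM n m))).Finite := by
      refine Set.Finite.preimage ?_ h1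
      intro a _ b _ hab
      have := congrArg List.length hab; simpa [node_len] using this
    refine h2.subset ?_
    intro k hk
    exact ⟨hk, ⟨k, rfl⟩⟩
  have hex : ∃ k, 2 ≤ k ∧ node n m k ∉ U := by
    have : ({k | node n m k ∈ U} ∪ Set.Iio 2).Finite := hbad.union (Set.finite_Iio 2)
    rcases this.infinite_compl.nonempty with ⟨k, hk⟩
    simp only [Set.mem_compl_iff, Set.mem_union, Set.mem_setOf_eq, Set.mem_Iio, not_or,
      not_lt] at hk
    exact ⟨k, hk.2, hk.1⟩
  have := hex.choose_spec
  rw [pickK, dif_pos hex] at *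
  exact ⟨this.1, by rw [pickNode, pickK, dif_pos hex]; exact this.2⟩


lemma pickNode_prefix {U U' : Set (List ℕ)} (hU : ∀ f, (U ∩ Br f).Finite)
    (hU' : ∀ f, (U' ∩ Br f).Finite) {n m n' m' : ℕ}
    (h : pickNode n m U <+: pickNode n' m' U') : n = n' ∧ m = m' := by
  have h2 := (pick_spec hU n m).1
  have h2' := (pick_spec hU' n' m').1
  have hlen : 2 ≤ (pickNode n m U).length := by rw [pickNode, node_len]; exact h2
  have e0 : (pickNode n m U)[0]'(by omega) = (pickNode n' m' U')[0]'(by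
      have := h.length_le; omega) := h.getElem (by omega)
  have e1 : (pickNode n m U)[1]'(by omega) = (pickNode n' m' U')[1]'(by
      have := h.length_le; omega) := h.getElem (by omega)
  unfold pickNode at e0 e1
  rw [node_get0 _ _ _ (by omega), node_get0 _ _ _ (by omega)] at e0
  rw [node_get1 _ _ _ h2, node_get1 _ _ _ h2'] at e1
  exact ⟨e0, e1⟩

def XX (n : ℕ) (U : Set (List ℕ)) : Set (List ℕ) := Set.range fun m => pickNode n m U

lemma XX_infinite {U : Set (List ℕ)} (hU : ∀ f, (U ∩ Br f).Finite) (n : ℕ) :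
    (XX n U).Infinite := by
  apply Set.infinite_range_of_injective
  intro a b hab
  have hab' : pickNode n a U = pickNode n b U := hab
  have hpre : pickNode n a U <+: pickNode n b U := by rw [hab']
  exact (pickNode_prefix hU hU hpre).2

lemma XX_offBranch {U : Set (List ℕ)} (hU : ∀ f, (U ∩ Br f).Finite) (n : ℕ) :
    OffBranch (XX n U) := by
  apply offBranch_of_incomp
  rintro x ⟨m, rfl⟩ y ⟨m', rfl⟩ hp
  rw [(pickNode_prefix hU hU hp).2]

lemma XX_disjoint {U : Set (List ℕ)} (hU : ∀ f, (U ∩ Br f).Finite) (n : ℕ) :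
    ∀ x ∈ XX n U, x ∉ U := by
  rintro x ⟨m, rfl⟩
  exact (pick_spec hU n m).2


def Fsupp (O : Set (Set (List ℕ))) (S : Set (List ℕ)) : Set (Set (List ℕ)) :=
  {A | A ∈ O ∧ (A ∩ S).Infinite}

noncomputable def UU (O : Set (Set (List ℕ))) : ℕ → Set (List ℕ)
  | 0 => ∅
  | n + 1 => UU O n ∪ ⋃ A ∈ Fsupp O (XX n (UU O n)), A

variable {O : Set (Set (List ℕ))}

lemma UU_branch (hO : MaxOffBranchFam O)
    (hfin : ∀ S : Set (List ℕ), S.Infinite → OffBranch S → (Fsupp O S).Finite) :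
    ∀ n f, (UU O n ∩ Br f).Finite := by
  intro n
  induction n with
  | zero => intro f; simp [UU]
  | succ n ih =>
    intro f
    rw [UU]
    have hF : (Fsupp O (XX n (UU O n))).Finite :=
      hfin _ (XX_infinite ih n) (XX_offBranch ih n)
    have : (UU O n ∪ ⋃ A ∈ Fsupp O (XX n (UU O n)), A) ∩ Br f
        = (UU O n ∩ Br f) ∪ ⋃ A ∈ Fsupp O (XX n (UU O n)), (A ∩ Br f) := by
      rw [Set.union_inter_distrib_right, Set.iUnion₂_inter]
    rw [this]
    refine (ih f).union ?_
    exact hF.biUnion (fun A hA => offBranch_inter_Br (hO.1.1 A hA.1).2 f)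

lemma UU_mono (hO : MaxOffBranchFam O)
    (hfin : ∀ S : Set (List ℕ), S.Infinite → OffBranch S → (Fsupp O S).Finite) :
    ∀ {m n}, m ≤ n → UU O m ⊆ UU O n := by
  intro m n h
  induction n with
  | zero => rw [Nat.le_zero.mp h]
  | succ n ih =>
    rcases Nat.lt_or_ge m (n+1) with h' | h'
    · exact (ih (by omega)).trans (by rw [UU]; exact Set.subset_union_left)
    · rw [Nat.le_antisymm h h']

/-- Main claim: some infinite off-branch set has infinite support in `O`. -/
lemma main_claim (hO : MaxOffBranchFam O) :
    ∃ X : Set (List ℕ), X.Infinite ∧ OffBranch X ∧ (Fsupp O X).Infinite := by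
  by_contra hcon
  push_neg at hcon
  have hfin : ∀ S : Set (List ℕ), S.Infinite → OffBranch S → (Fsupp O S).Finite := by
    intro S h1 h2
    have h := hcon S h1 h2
    exact h
  have hbr := UU_branch hO hfin
  -- the chosen almost-disjoint witnesses
  have hex : ∀ n, ∃ A ∈ O, (XX n (UU O n) ∩ A).Infinite :=
    fun n => hO.2 _ (XX_infinite (hbr n) n) (XX_offBranch (hbr n) n)
  choose Aseq hAseqO hAseqInf using hex
  have hAseqF : ∀ n, Aseq n ∈ Fsupp O (XX n (UU O n)) := by
    intro n
    exact ⟨hAseqO n, by rw [Set.inter_comm]; exact hAseqInf n⟩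
  have hsubU : ∀ n, Aseq n ⊆ UU O (n + 1) := by
    intro n x hx
    rw [UU]
    exact Set.mem_union_right _ (Set.mem_biUnion (hAseqF n) hx)
  -- Y : union of the XX's
  set Y : Set (List ℕ) := ⋃ n, XX n (UU O n) with hY
  have hYinf : Y.Infinite := (XX_infinite (hbr 0) 0).mono (Set.subset_iUnion _ 0)
  have hYoff : OffBranch Y := by
    apply offBranch_of_incomp
    rintro x hx y hy hp
    rw [Set.mem_iUnion] at hx hy
    rcases hx with ⟨n, m, rfl⟩
    rcases hy with ⟨n', m', rfl⟩
    rcases pickNode_prefix (hbr n) (hbr n') hp with ⟨rfl, rfl⟩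
    rfl
  have hinj : Function.Injective Aseq := by
    have key : ∀ m n, m < n → Aseq m ≠ Aseq n := by
      intro m n hmn heq
      have h1 : Aseq m ⊆ UU O n := (hsubU m).trans (UU_mono hO hfin hmn)
      rcases (hAseqInf n).nonempty with ⟨x, hx1, hx2⟩
      exact XX_disjoint (hbr n) n x hx1 (h1 (heq ▸ hx2))
    intro m n heq
    by_contra hne
    rcases Nat.lt_or_ge m n with h | h
    · exact key m n h heq
    · exact key n m (by omega) heq.symm
  have hmem : ∀ n, Aseq n ∈ Fsupp O Y := by
    intro n
    refine ⟨hAseqO n, (hAseqInf n).mono ?_⟩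
    intro x hx
    exact ⟨hx.2, Set.mem_iUnion.mpr ⟨n, hx.1⟩⟩
  have : (Fsupp O Y).Infinite := Set.infinite_of_injective_forall_mem hinj hmem
  exact this (hfin Y hYinf hYoff)


end Aux
namespace Aux
-- transfer to a MAD family on ℕ
lemma exists_madfam {O : Set (Set (List ℕ))} (hO : MaxOffBranchFam O) :
    ∃ 𝒜 : Set (Set ℕ), MadFam 𝒜 ∧ Cardinal.mk ↥𝒜 ≤ Cardinal.mk ↥O := by
  obtain ⟨X, hXinf, hXoff, hFinf⟩ := main_claim hO
  haveI : Countable ↥X := (Set.to_countable X).to_subtype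
  haveI : Infinite ↥X := hXinf.to_subtype
  obtain ⟨d⟩ := nonempty_denumerable ↥X
  let e : ℕ ≃ ↥X := (Denumerable.eqv ↥X).symm
  let c : ℕ → List ℕ := fun k => (e k : List ℕ)
  have hcinj : Function.Injective c := fun a b hab => e.injective (Subtype.ext hab)
  have hcrange : Set.range c = X := by
    ext l
    constructor
    · rintro ⟨k, rfl⟩; exact (e k).2
    · intro hl; exact ⟨e.symm ⟨l, hl⟩, by simp [c]⟩
  let g : Set (List ℕ) → Set ℕ := fun A => c ⁻¹' A
  have himg : ∀ A : Set (List ℕ), c '' (g A) = A ∩ X := by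
    intro A
    rw [Set.image_preimage_eq_inter_range, hcrange]
  have hginf : ∀ A : Set (List ℕ), (A ∩ X).Infinite → (g A).Infinite := by
    intro A hA hfin
    have := hfin.image c
    rw [himg] at this
    exact hA this
  have hgfin : ∀ A : Set (List ℕ), (A).Finite → (g A).Finite := by
    intro A hA
    have : g A = c ⁻¹' (A ∩ X) := by
      ext k
      simp only [g, Set.mem_preimage, Set.mem_inter_iff, iff_self_and]
      intro _
      rw [← hcrange]; exact ⟨k, rfl⟩
    rw [this]
    exact Set.Finite.preimage hcinj.injOn (hA.inter_of_left X)
  set F := Fsupp O X with hF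
  have hgiF : Set.InjOn g F := by
    intro A hA A' hA' hgg
    by_contra hne
    have h1 : (A ∩ A').Finite := hO.1.2 hA.1 hA'.1 hne
    have h2 : A ∩ X = A' ∩ X := by rw [← himg, ← himg, hgg]
    exact hA.2 (h1.subset (fun x hx => ⟨hx.1, (h2 ▸ hx : x ∈ A' ∩ X).1⟩))
  refine ⟨g '' F, ⟨?_, ?_, ?_, ?_⟩, le_trans Cardinal.mk_image_le
    (Cardinal.mk_le_mk_of_subset (fun A hA => hA.1))⟩
  · exact hFinf.image hgiF
  · rintro B ⟨A, hA, rfl⟩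
    exact hginf A hA.2
  · rintro B ⟨A, hA, rfl⟩ B' ⟨A', hA', rfl⟩ hne
    have hAne : A ≠ A' := fun h => hne (by rw [h])
    have h1 : (A ∩ A').Finite := hO.1.2 hA.1 hA'.1 hAne
    have : g A ∩ g A' = g (A ∩ A') := rfl
    rw [this]
    exact hgfin _ h1
  · intro B hB
    have hCinf : (c '' B).Infinite := hB.image hcinj.injOn
    have hCX : c '' B ⊆ X := by rw [← hcrange]; exact Set.image_subset_range _ _
    have hCoff : OffBranch (c '' B) := fun b hb =>
      (hXoff b hb).subset (Set.inter_subset_inter_left b hCX)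
    obtain ⟨A, hAO, hCA⟩ := hO.2 _ hCinf hCoff
    have hAF : A ∈ F := ⟨hAO, hCA.mono (fun x hx => ⟨hx.2, hCX hx.1⟩)⟩
    refine ⟨g A, ⟨A, hAF, rfl⟩, ?_⟩
    intro hfin
    have := hfin.image c
    rw [Set.image_inter_preimage c B A] at this
    exact hCA (this.subset (fun x hx => ⟨hx.1, hx.2⟩))

lemma exists_maxfam : ∃ O : Set (Set (List ℕ)), MaxOffBranchFam O := by
  obtain ⟨M, hM⟩ := zorn_subset
    {O : Set (Set (List ℕ)) | (∀ A ∈ O, A.Infinite ∧ OffBranch A) ∧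
      O.Pairwise (fun A B => (A ∩ B).Finite)}
    (by
      intro ch hch hchain
      refine ⟨⋃₀ ch, ⟨?_, ?_⟩, fun s hs => Set.subset_sUnion_of_mem hs⟩
      · rintro A ⟨o, ho, hA⟩
        exact (hch ho).1 A hA
      · rintro A ⟨o, ho, hA⟩ B ⟨o', ho', hB⟩ hne
        rcases hchain.total ho ho' with h | h
        · exact (hch ho').2 (h hA) hB hne
        · exact (hch ho).2 hA (h hB) hne)
  refine ⟨M, ⟨hM.prop, ?_⟩⟩
  intro B hBinf hBoff
  by_contra hcon
  push_neg at hcon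
  have hBM : B ∉ M := fun h => (Set.not_infinite.mpr (by
    simpa using hcon B h)) hBinf
  have hins : insert B M ∈ {O : Set (Set (List ℕ)) | (∀ A ∈ O, A.Infinite ∧ OffBranch A) ∧
      O.Pairwise (fun A B => (A ∩ B).Finite)} := by
    constructor
    · rintro A (rfl | hA)
      · exact ⟨hBinf, hBoff⟩
      · exact hM.prop.1 A hA
    · refine (@Set.pairwise_insert_of_symm_of_notMem _ (fun A B : Set (List ℕ) => (A ∩ B).Finite) _ _ ⟨?_⟩ hBM).mpr ⟨hM.prop.2, ?_⟩
      · intro A A' h; rwa [Set.inter_comm]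
      · intro A hA
        exact hcon A hA
  exact hBM ((hM.2 hins (Set.subset_insert B M)) (Set.mem_insert B M))


end Aux

/-- `𝔞 ≤ 𝔬`. -/
theorem frakA_le_frakO : frakA ≤ frakO := by
  classical
  obtain ⟨O0, hO0⟩ := Aux.exists_maxfam
  have hne : {c | ∃ 𝒪 : Set (Set (List ℕ)), MaxOffBranchFam 𝒪 ∧ Cardinal.mk ↥𝒪 = c}.Nonempty :=
    ⟨_, O0, hO0, rfl⟩
  obtain ⟨O, hO, hOc⟩ := csInf_mem hne
  obtain ⟨𝒜, h𝒜, hle⟩ := Aux.exists_madfam hO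
  calc frakA ≤ Cardinal.mk ↥𝒜 := csInf_le' ⟨𝒜, h𝒜, rfl⟩
    _ ≤ Cardinal.mk ↥O := hle
    _ = frakO := hOc
end
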